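/- The matrix π₁ satisfies the orthogonality relations defining A_q(B₃): for all 1 ≤ i,m ≤ 7 one has Σ_{j,k,l=1}^{7} C_{jk} C_{lm} π₁(t_{ij}) ∘ π₁(t_{lk}) = δ_{i,m}·id_F and Σ_{j,k,l=1}^{7} C_{ij} C_{kl} π₁(t_{kj}) ∘ π₁(t_{lm}) = δ_{i,m}·id_F as operators on F. -/

import Mathlib

open TensorProduct

noncomputable section

abbrev Fq : Type := RatFunc ℚ

def q : Fq := RatFunc.X

abbrev F : Type := ℕ →₀ Fq

def ket (m : ℕ) : F := Finsupp.single m 1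

/-- Linear operator on the Fock space from its action on the basis. -/
def opOf (v : ℕ → F) : F →ₗ[Fq] F := Finsupp.lift F Fq ℕ v

/-- q²-oscillator K -/
def K2 : F →ₗ[Fq] F := opOf fun m => q ^ (2 * m) • ket m
/-- q²-oscillator A⁺ -/
def Ap : F →ₗ[Fq] F := opOf fun m => ket (m + 1)
/-- q²-oscillator A⁻ -/
def Am : F →ₗ[Fq] F := opOf fun m => (1 - q ^ (4 * m)) • ket (m - 1)
/-- q-oscillator k -/
def kk : F →ₗ[Fq] F := opOf fun m => q ^ m • ket m
/-- q-oscillator a⁺ -/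
def ap : F →ₗ[Fq] F := opOf fun m => ket (m + 1)
/-- q-oscillator a⁻ -/
def am : F →ₗ[Fq] F := opOf fun m => (1 - q ^ (2 * m)) • ket (m - 1)

def pi1 (α β μ ν κ σ : Fq) : Matrix (Fin 7) (Fin 7) (F →ₗ[Fq] F) :=
  !![μ • Am, α • K2, 0, 0, 0, 0, 0;
     β • K2, ν • Ap, 0, 0, 0, 0, 0;
     0, 0, κ • LinearMap.id, 0, 0, 0, 0;
     0, 0, 0, σ • LinearMap.id, 0, 0, 0;
     0, 0, 0, 0, κ⁻¹ • LinearMap.id, 0, 0;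
     0, 0, 0, 0, 0, ν⁻¹ • Am, (q ^ 2 * β⁻¹) • K2;
     0, 0, 0, 0, 0, (q ^ 2 * α⁻¹) • K2, μ⁻¹ • Ap]

def pi2 (α β μ ν κ σ : Fq) : Matrix (Fin 7) (Fin 7) (F →ₗ[Fq] F) :=
  !![κ • LinearMap.id, 0, 0, 0, 0, 0, 0;
     0, μ • Am, α • K2, 0, 0, 0, 0;
     0, β • K2, ν • Ap, 0, 0, 0, 0;
     0, 0, 0, σ • LinearMap.id, 0, 0, 0;
     0, 0, 0, 0, ν⁻¹ • Am, (q ^ 2 * β⁻¹) • K2, 0;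
     0, 0, 0, 0, (q ^ 2 * α⁻¹) • K2, μ⁻¹ • Ap, 0;
     0, 0, 0, 0, 0, 0, κ⁻¹ • LinearMap.id]

def pi3 (α μ κa κb : Fq) : Matrix (Fin 7) (Fin 7) (F →ₗ[Fq] F) :=
  !![κa • LinearMap.id, 0, 0, 0, 0, 0, 0;
     0, κb • LinearMap.id, 0, 0, 0, 0, 0;
     0, 0, μ • (am ∘ₗ am), α • (kk ∘ₗ am), (-((1 + q ^ 2) * μ)⁻¹ * α ^ 2) • (kk ∘ₗ kk), 0, 0;
     0, 0, (-(1 + q ^ 2) * α⁻¹ * μ) • (am ∘ₗ kk), am ∘ₗ ap - kk ∘ₗ kk, (-(q * μ)⁻¹ * α) • (kk ∘ₗ ap), 0, 0;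
     0, 0, (-(1 + q ^ 2) * q ^ 2 * α⁻¹ ^ 2 * μ) • (kk ∘ₗ kk), ((1 + q ^ 2) * α⁻¹) • (kk ∘ₗ ap), μ⁻¹ • (ap ∘ₗ ap), 0, 0;
     0, 0, 0, 0, 0, κb⁻¹ • LinearMap.id, 0;
     0, 0, 0, 0, 0, 0, κa⁻¹ • LinearMap.id]

def rhoB : Fin 7 → ℤ := ![5, 3, 1, 0, -1, -3, -5]

def CB : Matrix (Fin 7) (Fin 7) Fq := fun i j => if (i : ℕ) + (j : ℕ) = 6 then q ^ rhoB j else 0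


-- ======================= auxiliary material =======================

lemma hq : q ≠ 0 := RatFunc.X_ne_zero

lemma opOf_ket (v : ℕ → F) (n : ℕ) : opOf v (ket n) = v n := by simp [opOf, ket]
lemma K2_ket (n : ℕ) : K2 (ket n) = q ^ (2 * n) • ket n := opOf_ket _ n
lemma Ap_ket (n : ℕ) : Ap (ket n) = ket (n + 1) := opOf_ket _ n
lemma Am_ket (n : ℕ) : Am (ket n) = (1 - q ^ (4 * n)) • ket (n - 1) := opOf_ket _ n

lemma opext {f g : F →ₗ[Fq] F} (h : ∀ n, f (ket n) = g (ket n)) : f = g := by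
  refine Finsupp.lhom_ext' fun n => LinearMap.ext_ring ?_
  simpa [ket] using h n

lemma AmAp : Am ∘ₗ Ap = LinearMap.id - q ^ 4 • (K2 ∘ₗ K2) := by
  refine opext fun n => ?_
  simp only [LinearMap.comp_apply, LinearMap.sub_apply, LinearMap.id_apply,
    LinearMap.smul_apply, map_smul, K2_ket, Ap_ket, Am_ket, smul_smul, Nat.add_sub_cancel]
  rw [sub_smul, one_smul]
  congr 2
  ring

lemma ApAm : Ap ∘ₗ Am = LinearMap.id - K2 ∘ₗ K2 := by
  refine opext fun n => ?_
  simp only [LinearMap.comp_apply, LinearMap.sub_apply, LinearMap.id_apply,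
    map_smul, K2_ket, Ap_ket, Am_ket, smul_smul]
  cases n with
  | zero => norm_num
  | succ n => rw [Nat.add_sub_cancel, sub_smul, one_smul]; congr 2; ring

lemma K2Ap : K2 ∘ₗ Ap = q ^ 2 • (Ap ∘ₗ K2) := by
  refine opext fun n => ?_
  simp only [LinearMap.comp_apply, LinearMap.smul_apply, map_smul, K2_ket, Ap_ket, smul_smul]
  congr 1; ring

lemma AmK2 : Am ∘ₗ K2 = q ^ 2 • (K2 ∘ₗ Am) := by
  refine opext fun n => ?_
  simp only [LinearMap.comp_apply, LinearMap.smul_apply, map_smul, K2_ket, Am_ket, smul_smul]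
  cases n with
  | zero => norm_num
  | succ n => rw [Nat.add_sub_cancel]; congr 1; ring

def rv : Fin 7 → Fin 7 := ![6, 5, 4, 3, 2, 1, 0]
lemma rv0 : rv 0 = 6 := rfl
lemma rv1 : rv 1 = 5 := rfl
lemma rv2 : rv 2 = 4 := rfl
lemma rv3 : rv 3 = 3 := rfl
lemma rv4 : rv 4 = 2 := rfl
lemma rv5 : rv 5 = 1 := rfl
lemma rv6 : rv 6 = 0 := rfl
lemma rh0 : rhoB 0 = 5 := rfl
lemma rh1 : rhoB 1 = 3 := rfl
lemma rh2 : rhoB 2 = 1 := rfl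
lemma rh3 : rhoB 3 = 0 := rfl
lemma rh4 : rhoB 4 = -1 := rfl
lemma rh5 : rhoB 5 = -3 := rfl
lemma rh6 : rhoB 6 = -5 := rfl
lemma fm0 : (⟨0, by omega⟩ : Fin 7) = 0 := rfl
lemma fm1 : (⟨1, by omega⟩ : Fin 7) = 1 := rfl
lemma fm2 : (⟨2, by omega⟩ : Fin 7) = 2 := rfl
lemma fm3 : (⟨3, by omega⟩ : Fin 7) = 3 := rfl
lemma fm4 : (⟨4, by omega⟩ : Fin 7) = 4 := rfl
lemma fm5 : (⟨5, by omega⟩ : Fin 7) = 5 := rfl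
lemma fm6 : (⟨6, by omega⟩ : Fin 7) = 6 := rfl

lemma qe1 : q ^ (-5:ℤ) * q ^ (5:ℤ) = 1 := by
  rw [← zpow_add₀ hq]; norm_num
lemma qe2 : q ^ (-3:ℤ) * q ^ (3:ℤ) = 1 := by
  rw [← zpow_add₀ hq]; norm_num
lemma qe3 : q ^ (-1:ℤ) * q ^ (1:ℤ) = 1 := by
  rw [← zpow_add₀ hq]; norm_num
lemma qe4 : q ^ (1:ℤ) * q ^ (-1:ℤ) = 1 := by
  rw [← zpow_add₀ hq]; norm_num
lemma qe5 : q ^ (3:ℤ) * q ^ (-3:ℤ) = 1 := by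
  rw [← zpow_add₀ hq]; norm_num
lemma qe6 : q ^ (5:ℤ) * q ^ (-5:ℤ) = 1 := by
  rw [← zpow_add₀ hq]; norm_num
lemma qe7 : q ^ (0:ℤ) * q ^ (0:ℤ) = 1 := by norm_num
lemma qe8 : q ^ (-3:ℤ) * q ^ (5:ℤ) = q ^ 2 := by
  rw [← zpow_add₀ hq]; norm_num
lemma qe9 : q ^ (5:ℤ) * q ^ (-3:ℤ) = q ^ 2 := by
  rw [← zpow_add₀ hq]; norm_num
lemma qe10 : q ^ (-5:ℤ) * q ^ (3:ℤ) = (q ^ 2)⁻¹ := by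
  rw [← zpow_add₀ hq]
  rw [show ((-5:ℤ)+3) = -2 by norm_num, zpow_neg]
  norm_cast
lemma qe11 : q ^ (3:ℤ) * q ^ (-5:ℤ) = (q ^ 2)⁻¹ := by
  rw [← zpow_add₀ hq]
  rw [show ((3:ℤ)+(-5)) = -2 by norm_num, zpow_neg]
  norm_cast

lemma p00 (α β μ ν κ σ : Fq) : pi1 α β μ ν κ σ 0 0 = μ • Am := rfl
lemma p01 (α β μ ν κ σ : Fq) : pi1 α β μ ν κ σ 0 1 = α • K2 := rfl
lemma p02 (α β μ ν κ σ : Fq) : pi1 α β μ ν κ σ 0 2 = 0 := rfl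
lemma p03 (α β μ ν κ σ : Fq) : pi1 α β μ ν κ σ 0 3 = 0 := rfl
lemma p04 (α β μ ν κ σ : Fq) : pi1 α β μ ν κ σ 0 4 = 0 := rfl
lemma p05 (α β μ ν κ σ : Fq) : pi1 α β μ ν κ σ 0 5 = 0 := rfl
lemma p06 (α β μ ν κ σ : Fq) : pi1 α β μ ν κ σ 0 6 = 0 := rfl
lemma p10 (α β μ ν κ σ : Fq) : pi1 α β μ ν κ σ 1 0 = β • K2 := rfl
lemma p11 (α β μ ν κ σ : Fq) : pi1 α β μ ν κ σ 1 1 = ν • Ap := rfl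
lemma p12 (α β μ ν κ σ : Fq) : pi1 α β μ ν κ σ 1 2 = 0 := rfl
lemma p13 (α β μ ν κ σ : Fq) : pi1 α β μ ν κ σ 1 3 = 0 := rfl
lemma p14 (α β μ ν κ σ : Fq) : pi1 α β μ ν κ σ 1 4 = 0 := rfl
lemma p15 (α β μ ν κ σ : Fq) : pi1 α β μ ν κ σ 1 5 = 0 := rfl
lemma p16 (α β μ ν κ σ : Fq) : pi1 α β μ ν κ σ 1 6 = 0 := rfl
lemma p20 (α β μ ν κ σ : Fq) : pi1 α β μ ν κ σ 2 0 = 0 := rfl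
lemma p21 (α β μ ν κ σ : Fq) : pi1 α β μ ν κ σ 2 1 = 0 := rfl
lemma p22 (α β μ ν κ σ : Fq) : pi1 α β μ ν κ σ 2 2 = κ • LinearMap.id := rfl
lemma p23 (α β μ ν κ σ : Fq) : pi1 α β μ ν κ σ 2 3 = 0 := rfl
lemma p24 (α β μ ν κ σ : Fq) : pi1 α β μ ν κ σ 2 4 = 0 := rfl
lemma p25 (α β μ ν κ σ : Fq) : pi1 α β μ ν κ σ 2 5 = 0 := rfl
lemma p26 (α β μ ν κ σ : Fq) : pi1 α β μ ν κ σ 2 6 = 0 := rfl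
lemma p30 (α β μ ν κ σ : Fq) : pi1 α β μ ν κ σ 3 0 = 0 := rfl
lemma p31 (α β μ ν κ σ : Fq) : pi1 α β μ ν κ σ 3 1 = 0 := rfl
lemma p32 (α β μ ν κ σ : Fq) : pi1 α β μ ν κ σ 3 2 = 0 := rfl
lemma p33 (α β μ ν κ σ : Fq) : pi1 α β μ ν κ σ 3 3 = σ • LinearMap.id := rfl
lemma p34 (α β μ ν κ σ : Fq) : pi1 α β μ ν κ σ 3 4 = 0 := rfl
lemma p35 (α β μ ν κ σ : Fq) : pi1 α β μ ν κ σ 3 5 = 0 := rfl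
lemma p36 (α β μ ν κ σ : Fq) : pi1 α β μ ν κ σ 3 6 = 0 := rfl
lemma p40 (α β μ ν κ σ : Fq) : pi1 α β μ ν κ σ 4 0 = 0 := rfl
lemma p41 (α β μ ν κ σ : Fq) : pi1 α β μ ν κ σ 4 1 = 0 := rfl
lemma p42 (α β μ ν κ σ : Fq) : pi1 α β μ ν κ σ 4 2 = 0 := rfl
lemma p43 (α β μ ν κ σ : Fq) : pi1 α β μ ν κ σ 4 3 = 0 := rfl
lemma p44 (α β μ ν κ σ : Fq) : pi1 α β μ ν κ σ 4 4 = κ⁻¹ • LinearMap.id := rfl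
lemma p45 (α β μ ν κ σ : Fq) : pi1 α β μ ν κ σ 4 5 = 0 := rfl
lemma p46 (α β μ ν κ σ : Fq) : pi1 α β μ ν κ σ 4 6 = 0 := rfl
lemma p50 (α β μ ν κ σ : Fq) : pi1 α β μ ν κ σ 5 0 = 0 := rfl
lemma p51 (α β μ ν κ σ : Fq) : pi1 α β μ ν κ σ 5 1 = 0 := rfl
lemma p52 (α β μ ν κ σ : Fq) : pi1 α β μ ν κ σ 5 2 = 0 := rfl
lemma p53 (α β μ ν κ σ : Fq) : pi1 α β μ ν κ σ 5 3 = 0 := rfl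
lemma p54 (α β μ ν κ σ : Fq) : pi1 α β μ ν κ σ 5 4 = 0 := rfl
lemma p55 (α β μ ν κ σ : Fq) : pi1 α β μ ν κ σ 5 5 = ν⁻¹ • Am := rfl
lemma p56 (α β μ ν κ σ : Fq) : pi1 α β μ ν κ σ 5 6 = (q ^ 2 * β⁻¹) • K2 := rfl
lemma p60 (α β μ ν κ σ : Fq) : pi1 α β μ ν κ σ 6 0 = 0 := rfl
lemma p61 (α β μ ν κ σ : Fq) : pi1 α β μ ν κ σ 6 1 = 0 := rfl
lemma p62 (α β μ ν κ σ : Fq) : pi1 α β μ ν κ σ 6 2 = 0 := rfl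
lemma p63 (α β μ ν κ σ : Fq) : pi1 α β μ ν κ σ 6 3 = 0 := rfl
lemma p64 (α β μ ν κ σ : Fq) : pi1 α β μ ν κ σ 6 4 = 0 := rfl
lemma p65 (α β μ ν κ σ : Fq) : pi1 α β μ ν κ σ 6 5 = (q ^ 2 * α⁻¹) • K2 := rfl
lemma p66 (α β μ ν κ σ : Fq) : pi1 α β μ ν κ σ 6 6 = μ⁻¹ • Ap := rfl

lemma smul_id (c : Fq) (h : c = 1) : c • (LinearMap.id : F →ₗ[Fq] F) = LinearMap.id := by
  rw [h, one_smul]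
lemma combo2_zero (c d : Fq) (W : F →ₗ[Fq] F) (h : c + d = 0) : c • W + d • W = 0 := by
  rw [← add_smul, h, zero_smul]
lemma comboB1 (c d e : Fq) (Z : F →ₗ[Fq] F) (h1 : c = 1) (h2 : d = c * e) :
    c • (LinearMap.id - e • Z) + d • Z = LinearMap.id := by
  rw [h1, one_smul, h2, h1, one_mul]; abel
lemma comboB2 (c d : Fq) (Z : F →ₗ[Fq] F) (h1 : d = 1) (h2 : c = d) :
    c • Z + d • (LinearMap.id - Z) = LinearMap.id := by
  rw [h1, one_smul, h2, h1, one_smul]; abel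

lemma sum_CB_fst (m : Fin 7) (f : Fin 7 → (F →ₗ[Fq] F)) :
    ∑ l, CB l m • f l = q ^ rhoB m • f (rv m) := by
  fin_cases m <;> simp (config := { decide := true }) [CB, Fin.sum_univ_seven,
    rv0, rv1, rv2, rv3, rv4, rv5, rv6, rh0, rh1, rh2, rh3, rh4, rh5, rh6]

lemma sum_CB_snd (j : Fin 7) (f : Fin 7 → (F →ₗ[Fq] F)) :
    ∑ k, CB j k • f k = q ^ rhoB (rv j) • f (rv j) := by
  fin_cases j <;> simp (config := { decide := true }) [CB, Fin.sum_univ_seven,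
    rv0, rv1, rv2, rv3, rv4, rv5, rv6, rh0, rh1, rh2, rh3, rh4, rh5, rh6]

lemma collapse1 (A : Matrix (Fin 7) (Fin 7) (F →ₗ[Fq] F)) (i m : Fin 7) :
    (∑ j : Fin 7, ∑ k : Fin 7, ∑ l : Fin 7, (CB j k * CB l m) • (A i j ∘ₗ A l k))
    = ∑ j : Fin 7, (q ^ rhoB (rv j) * q ^ rhoB m) • (A i j ∘ₗ A (rv m) (rv j)) := by
  refine Finset.sum_congr rfl fun j _ => ?_
  calc ∑ k : Fin 7, ∑ l : Fin 7, (CB j k * CB l m) • (A i j ∘ₗ A l k)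
      = ∑ k : Fin 7, CB j k • (q ^ rhoB m • (A i j ∘ₗ A (rv m) k)) := by
        refine Finset.sum_congr rfl fun k _ => ?_
        rw [← sum_CB_fst m (fun l => A i j ∘ₗ A l k), Finset.smul_sum]
        exact Finset.sum_congr rfl fun l _ => (mul_smul _ _ _)
    _ = q ^ rhoB (rv j) • (q ^ rhoB m • (A i j ∘ₗ A (rv m) (rv j))) :=
        sum_CB_snd j _
    _ = (q ^ rhoB (rv j) * q ^ rhoB m) • (A i j ∘ₗ A (rv m) (rv j)) := (mul_smul _ _ _).symm

lemma collapse2 (A : Matrix (Fin 7) (Fin 7) (F →ₗ[Fq] F)) (i m : Fin 7) :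
    (∑ j : Fin 7, ∑ k : Fin 7, ∑ l : Fin 7, (CB i j * CB k l) • (A k j ∘ₗ A l m))
    = ∑ k : Fin 7, (q ^ rhoB (rv i) * q ^ rhoB (rv k)) • (A k (rv i) ∘ₗ A (rv k) m) := by
  calc (∑ j : Fin 7, ∑ k : Fin 7, ∑ l : Fin 7, (CB i j * CB k l) • (A k j ∘ₗ A l m))
      = ∑ j : Fin 7, CB i j • ∑ k : Fin 7, (q ^ rhoB (rv k)) • (A k j ∘ₗ A (rv k) m) := by
        refine Finset.sum_congr rfl fun j _ => ?_
        rw [Finset.smul_sum]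
        refine Finset.sum_congr rfl fun k _ => ?_
        rw [← sum_CB_snd k (fun l => A k j ∘ₗ A l m), Finset.smul_sum]
        exact Finset.sum_congr rfl fun l _ => (mul_smul _ _ _)
    _ = q ^ rhoB (rv i) • ∑ k : Fin 7, (q ^ rhoB (rv k)) • (A k (rv i) ∘ₗ A (rv k) m) :=
        sum_CB_snd i _
    _ = ∑ k : Fin 7, (q ^ rhoB (rv i) * q ^ rhoB (rv k)) • (A k (rv i) ∘ₗ A (rv k) m) := by
        rw [Finset.smul_sum]
        exact Finset.sum_congr rfl fun k _ => (mul_smul _ _ _).symm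

set_option maxHeartbeats 4000000 in
lemma rel1 (α β μ ν κ σ : Fq) (hα : α ≠ 0) (hβ : β ≠ 0) (hμ : μ ≠ 0) (hν : ν ≠ 0)
    (hκ : κ ≠ 0) (hσ0 : σ ≠ 0)
    (hrel : α * β = -q ^ 2 * (μ * ν)) (hσ : σ = 1 ∨ σ = -1) :
    ∀ i m : Fin 7,
      (∑ j : Fin 7, (q ^ rhoB (rv j) * q ^ rhoB m) •
        (pi1 α β μ ν κ σ i j ∘ₗ pi1 α β μ ν κ σ (rv m) (rv j)))
        = if i = m then LinearMap.id else 0 := by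
  intro i m
  fin_cases i <;> fin_cases m <;>
    simp (config := { decide := true }) only [fm0, fm1, fm2, fm3, fm4, fm5, fm6,
      Fin.sum_univ_seven, rv0, rv1, rv2, rv3, rv4, rv5, rv6,
      rh0, rh1, rh2, rh3, rh4, rh5, rh6, p00, p01, p02, p03, p04, p05, p06, p10, p11, p12, p13, p14, p15, p16, p20, p21, p22, p23, p24, p25, p26, p30, p31, p32, p33, p34, p35, p36, p40, p41, p42, p43, p44, p45, p46, p50, p51, p52, p53, p54, p55, p56, p60, p61, p62, p63, p64, p65, p66,
      LinearMap.comp_zero, LinearMap.zero_comp, smul_zero, add_zero, zero_add,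
      LinearMap.smul_comp, LinearMap.comp_smul, smul_smul,
      LinearMap.id_comp, LinearMap.comp_id, AmAp, ApAm, K2Ap, AmK2,
      qe1, qe2, qe3, qe4, qe5, qe6, qe7, qe8, qe9, qe10, qe11,
      one_smul, if_true, if_false]
  · apply comboB1 <;> field_simp [hq] <;> try ring
  · apply combo2_zero
    field_simp [hq]
    linear_combination hrel
  · apply combo2_zero
    field_simp [hq]
    linear_combination q ^ 2 * hrel
  · apply comboB2 <;> field_simp [hq] <;> try ring
  · apply smul_id; field_simp
  · apply smul_id; rcases hσ with rfl | rfl <;> norm_num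
  · apply smul_id; field_simp
  · apply comboB1 <;> field_simp [hq] <;> try ring
  · apply combo2_zero
    field_simp [hq]
    linear_combination hrel
  · apply combo2_zero
    field_simp [hq]
    linear_combination q ^ 2 * hrel
  · apply comboB2 <;> field_simp [hq] <;> try ring

set_option maxHeartbeats 4000000 in
lemma rel2 (α β μ ν κ σ : Fq) (hα : α ≠ 0) (hβ : β ≠ 0) (hμ : μ ≠ 0) (hν : ν ≠ 0)
    (hκ : κ ≠ 0) (hσ0 : σ ≠ 0)
    (hrel : α * β = -q ^ 2 * (μ * ν)) (hσ : σ = 1 ∨ σ = -1) :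
    ∀ i m : Fin 7,
      (∑ k : Fin 7, (q ^ rhoB (rv i) * q ^ rhoB (rv k)) •
        (pi1 α β μ ν κ σ k (rv i) ∘ₗ pi1 α β μ ν κ σ (rv k) m))
        = if i = m then LinearMap.id else 0 := by
  intro i m
  fin_cases i <;> fin_cases m <;>
    simp (config := { decide := true }) only [fm0, fm1, fm2, fm3, fm4, fm5, fm6,
      Fin.sum_univ_seven, rv0, rv1, rv2, rv3, rv4, rv5, rv6,
      rh0, rh1, rh2, rh3, rh4, rh5, rh6, p00, p01, p02, p03, p04, p05, p06, p10, p11, p12, p13, p14, p15, p16, p20, p21, p22, p23, p24, p25, p26, p30, p31, p32, p33, p34, p35, p36, p40, p41, p42, p43, p44, p45, p46, p50, p51, p52, p53, p54, p55, p56, p60, p61, p62, p63, p64, p65, p66,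
      LinearMap.comp_zero, LinearMap.zero_comp, smul_zero, add_zero, zero_add,
      LinearMap.smul_comp, LinearMap.comp_smul, smul_smul,
      LinearMap.id_comp, LinearMap.comp_id, AmAp, ApAm, K2Ap, AmK2,
      qe1, qe2, qe3, qe4, qe5, qe6, qe7, qe8, qe9, qe10, qe11,
      one_smul, if_true, if_false]
  · apply comboB2 <;> field_simp [hq] <;> try ring
  · apply combo2_zero
    field_simp [hq]
    linear_combination hrel
  · apply combo2_zero
    field_simp [hq]
    linear_combination q ^ 2 * hrel
  · apply comboB1 <;> field_simp [hq] <;> try ring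
  · apply smul_id; field_simp
  · apply smul_id; rcases hσ with rfl | rfl <;> norm_num
  · apply smul_id; field_simp
  · apply comboB2 <;> field_simp [hq] <;> try ring
  · apply combo2_zero
    field_simp [hq]
    linear_combination hrel
  · apply combo2_zero
    field_simp [hq]
    linear_combination q ^ 2 * hrel
  · apply comboB1 <;> field_simp [hq] <;> try ring

-- ======================= end auxiliary material =======================

/-- the matrix π₁ satisfies the orthogonality relations defining A_q(B₃). -/
theorem pi1_orthogonality
    (α β μ ν κ σ : Fq) (hα : α ≠ 0) (hβ : β ≠ 0) (hμ : μ ≠ 0) (hν : ν ≠ 0)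
    (hκ : κ ≠ 0) (hσ0 : σ ≠ 0)
    (hrel : α * β = -q ^ 2 * (μ * ν)) (hσ : σ = 1 ∨ σ = -1) :
    ∀ i m : Fin 7,
      ((∑ j : Fin 7, ∑ k : Fin 7, ∑ l : Fin 7,
        (CB j k * CB l m) • (pi1 α β μ ν κ σ i j ∘ₗ pi1 α β μ ν κ σ l k))
        = if i = m then LinearMap.id else 0) ∧
      ((∑ j : Fin 7, ∑ k : Fin 7, ∑ l : Fin 7,
        (CB i j * CB k l) • (pi1 α β μ ν κ σ k j ∘ₗ pi1 α β μ ν κ σ l m))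
        = if i = m then LinearMap.id else 0) := by
  intro i m
  constructor
  · rw [collapse1]
    exact rel1 α β μ ν κ σ hα hβ hμ hν hκ hσ0 hrel hσ i m
  · rw [collapse2]
    exact rel2 α β μ ν κ σ hα hβ hμ hν hκ hσ0 hrel hσ i m
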